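/- Given two planar poses s₀ = (x₀, ψ₀) and s₁ = (x₁, ψ₁) with ψ₁ − ψ₀ ≢ 0 (mod 2π) and x₀ ≠ x₁, there exists a unique constant body-frame velocity (v, ω), up to positive time scaling, such that the trajectory generated by this velocity starting at s₀ reaches s₁ at time 1; i.e., the arc connecting two poses is uniquely determined. -/

import Mathlib

open intervalIntegral

lemma Icos (ω ψ : ℝ) (hω : ω ≠ 0) :
    ∫ t in (0:ℝ)..1, Real.cos (ω*t+ψ) = (Real.sin (ω+ψ) - Real.sin ψ)/ω := by
  rw [intervalIntegral.integral_comp_mul_add Real.cos hω ψ]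
  simp [integral_cos, div_eq_inv_mul]

lemma Isin (ω ψ : ℝ) (hω : ω ≠ 0) :
    ∫ t in (0:ℝ)..1, Real.sin (ω*t+ψ) = (Real.cos ψ - Real.cos (ω+ψ))/ω := by
  rw [intervalIntegral.integral_comp_mul_add Real.sin hω ψ]
  simp [integral_sin, div_eq_inv_mul, mul_sub]

lemma Ilin1 (ω ψ a b : ℝ) :
    ∫ t in (0:ℝ)..1, (Real.cos (ω*t+ψ) * a - Real.sin (ω*t+ψ) * b)
    = (∫ t in (0:ℝ)..1, Real.cos (ω*t+ψ)) * a
      - (∫ t in (0:ℝ)..1, Real.sin (ω*t+ψ)) * b := by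
  have h1 : IntervalIntegrable (fun t => Real.cos (ω*t+ψ) * a) MeasureTheory.volume 0 1 := by
    apply Continuous.intervalIntegrable; fun_prop
  have h2 : IntervalIntegrable (fun t => Real.sin (ω*t+ψ) * b) MeasureTheory.volume 0 1 := by
    apply Continuous.intervalIntegrable; fun_prop
  rw [intervalIntegral.integral_sub h1 h2, intervalIntegral.integral_mul_const,
    intervalIntegral.integral_mul_const]

lemma Ilin2 (ω ψ a b : ℝ) :
    ∫ t in (0:ℝ)..1, (Real.sin (ω*t+ψ) * a + Real.cos (ω*t+ψ) * b)
    = (∫ t in (0:ℝ)..1, Real.sin (ω*t+ψ)) * a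
      + (∫ t in (0:ℝ)..1, Real.cos (ω*t+ψ)) * b := by
  have h1 : IntervalIntegrable (fun t => Real.sin (ω*t+ψ) * a) MeasureTheory.volume 0 1 := by
    apply Continuous.intervalIntegrable; fun_prop
  have h2 : IntervalIntegrable (fun t => Real.cos (ω*t+ψ) * b) MeasureTheory.volume 0 1 := by
    apply Continuous.intervalIntegrable; fun_prop
  rw [intervalIntegral.integral_add h1 h2, intervalIntegral.integral_mul_const,
    intervalIntegral.integral_mul_const]

/-- Two planar poses with non-congruent orientations and distinct positions are
connected by a unique constant body-frame velocity reaching the goal at time 1. -/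
theorem stmt12 (x₀ x₁ : EuclideanSpace ℝ (Fin 2)) (ψ₀ ψ₁ : ℝ)
    (hψ : ∀ k : ℤ, ψ₁ - ψ₀ ≠ 2 * Real.pi * k) (hx : x₀ ≠ x₁) :
    ∃! vw : EuclideanSpace ℝ (Fin 2) × ℝ,
      ψ₁ = ψ₀ + vw.2 ∧
      x₁ 0 = x₀ 0 + ∫ t in (0:ℝ)..1,
        (Real.cos (vw.2 * t + ψ₀) * vw.1 0 - Real.sin (vw.2 * t + ψ₀) * vw.1 1) ∧
      x₁ 1 = x₀ 1 + ∫ t in (0:ℝ)..1,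
        (Real.sin (vw.2 * t + ψ₀) * vw.1 0 + Real.cos (vw.2 * t + ψ₀) * vw.1 1) := by
  set ω := ψ₁ - ψ₀ with hωdef
  have hω : ω ≠ 0 := by
    intro h; exact hψ 0 (by simpa using h)
  have hcos : Real.cos ω ≠ 1 := by
    intro h
    rcases (Real.cos_eq_one_iff ω).mp h with ⟨n, hn⟩
    exact hψ n (by rw [← hn]; push_cast; ring)
  set A := (Real.sin (ω+ψ₀) - Real.sin ψ₀)/ω with hA
  set B := (Real.cos ψ₀ - Real.cos (ω+ψ₀))/ω with hB
  have hD : A^2 + B^2 ≠ 0 := by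
    have : A^2 + B^2 = (2 - 2*Real.cos ω) / ω^2 := by
      rw [hA, hB, div_pow, div_pow, ← add_div]
      congr 1
      have := Real.cos_sub (ω+ψ₀) ψ₀
      simp only [add_sub_cancel_right] at this
      nlinarith [Real.sin_sq_add_cos_sq (ω+ψ₀), Real.sin_sq_add_cos_sq ψ₀]
    rw [this]
    apply div_ne_zero
    · intro h
      apply hcos; linarith
    · positivity
  set d0 := x₁ 0 - x₀ 0 with hd0
  set d1 := x₁ 1 - x₀ 1 with hd1
  set v0 := (A*d0 + B*d1)/(A^2+B^2) with hv0
  set v1 := (A*d1 - B*d0)/(A^2+B^2) with hv1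
  refine ⟨((WithLp.equiv 2 _).symm ![v0, v1], ω), ?_, ?_⟩
  · refine ⟨by ring, ?_, ?_⟩
    · simp only [WithLp.equiv_symm_apply, WithLp.ofLp_toLp, Matrix.cons_val_zero, Matrix.cons_val_one,
        Matrix.head_cons]
      rw [Ilin1, Icos ω ψ₀ hω, Isin ω ψ₀ hω, ← hA, ← hB]
      rw [hv0, hv1]
      field_simp
      ring
    · simp only [WithLp.equiv_symm_apply, WithLp.ofLp_toLp, Matrix.cons_val_zero, Matrix.cons_val_one,
        Matrix.head_cons]
      rw [Ilin2, Icos ω ψ₀ hω, Isin ω ψ₀ hω, ← hA, ← hB]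
      rw [hv0, hv1]
      field_simp
      ring
  · rintro ⟨v, w⟩ ⟨h1, h2, h3⟩
    have hw : w = ω := by rw [hωdef]; linarith
    subst hw
    rw [Ilin1, Icos ω ψ₀ hω, Isin ω ψ₀ hω, ← hA, ← hB] at h2
    rw [Ilin2, Icos ω ψ₀ hω, Isin ω ψ₀ hω, ← hA, ← hB] at h3
    have e0 : d0 = A * v 0 - B * v 1 := by rw [hd0]; linarith
    have e1 : d1 = B * v 0 + A * v 1 := by rw [hd1]; linarith
    have hv0' : v 0 = v0 := by
      rw [hv0, eq_div_iff hD, e0, e1]; ring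
    have hv1' : v 1 = v1 := by
      rw [hv1, eq_div_iff hD, e0, e1]; ring
    ext i
    · fin_cases i <;> simpa [WithLp.equiv_symm_apply, WithLp.ofLp_toLp] using (by assumption)
    · rfl
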